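/- Let S be an invertible real p×p matrix with rows and columns indexed by P. Then S ∈ 𝒮_𝒢 if and only if S⁻¹ ∈ 𝒮_𝒢; that is, 𝒮_𝒢 is closed under matrix inversion. -/

import Mathlib

open Matrix Finset

abbrev PairIdx (d : ℕ) := {p : Fin d × Fin d // p.1 < p.2}

/-- Pairs `r` and `s` lie in the same block: the unordered pairs of cluster labels coincide. -/
def sameBlock {d K : ℕ} (g : Fin d → Fin K) (r s : PairIdx d) : Prop :=
  (g r.1.1 = g s.1.1 ∧ g r.1.2 = g s.1.2) ∨ (g r.1.1 = g s.1.2 ∧ g r.1.2 = g s.1.1)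

instance {d K : ℕ} (g : Fin d → Fin K) : DecidableRel (sameBlock g) :=
  fun r s => by unfold sameBlock; infer_instance

/-- The overlap type `φ̄(r,s)`: the multiset of cluster labels of the elements of
`{i_r, j_r} ∩ {i_s, j_s}`.  The empty multiset encodes the type `(0,0)`, the singleton
`{k}` encodes `(0,k)`, and the two-element multiset `{k₁,k₂}` encodes
`(min(k₁,k₂), max(k₁,k₂))`. -/
def overlap {d K : ℕ} (g : Fin d → Fin K) (r s : PairIdx d) : Multiset (Fin K) :=
  (({r.1.1, r.1.2} ∩ {s.1.1, s.1.2} : Finset (Fin d)).val.map g)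

/-- The cardinality of the block containing `r`. -/
def blockCard {d K : ℕ} (g : Fin d → Fin K) (r : PairIdx d) : ℕ :=
  (Finset.univ.filter (fun t => sameBlock g r t)).card

/-- The blockwise-averaging matrix `Γ`. -/
noncomputable def Gamma {d K : ℕ} (g : Fin d → Fin K) :
    Matrix (PairIdx d) (PairIdx d) ℝ :=
  Matrix.of fun r s => if sameBlock g r s then (1 : ℝ) / (blockCard g r) else 0

/-- Membership in the class `𝒮_𝒢`. -/
def inSG {d K : ℕ} (g : Fin d → Fin K) (S : Matrix (PairIdx d) (PairIdx d) ℝ) : Prop :=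
  S.IsSymm ∧ ∀ r r' s s' : PairIdx d, sameBlock g r r' → sameBlock g s s' →
    overlap g r s = overlap g r' s' → S r s = S r' s'


namespace SGproof
variable {d K : ℕ}

def pairPerm (σ : Equiv.Perm (Fin d)) (r : PairIdx d) : PairIdx d :=
  if h : σ r.1.1 < σ r.1.2 then ⟨(σ r.1.1, σ r.1.2), h⟩
  else ⟨(σ r.1.2, σ r.1.1),
    lt_of_le_of_ne (not_lt.mp h) (fun he => (ne_of_gt r.2) (σ.injective he))⟩

lemma pairPerm_set (σ : Equiv.Perm (Fin d)) (r : PairIdx d) :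
    ({(pairPerm σ r).1.1, (pairPerm σ r).1.2} : Finset (Fin d))
      = Finset.image σ {r.1.1, r.1.2} := by
  unfold pairPerm
  split_ifs <;> simp [Finset.image_insert, Finset.pair_comm]

lemma pair_finset_inj {a b u v : Fin d} (hab : a < b) (huv : u < v)
    (h : ({a, b} : Finset (Fin d)) = {u, v}) : a = u ∧ b = v := by
  have ha : a = u ∨ a = v := by
    have := h ▸ (by simp : a ∈ ({a, b} : Finset (Fin d))); simpa using this
  have hb : b = u ∨ b = v := by
    have := h ▸ (by simp : b ∈ ({a, b} : Finset (Fin d))); simpa using this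
  have hu : u = a ∨ u = b := by
    have : u ∈ ({a, b} : Finset (Fin d)) := h ▸ (by simp); simpa using this
  have hv : v = a ∨ v = b := by
    have : v ∈ ({a, b} : Finset (Fin d)) := h ▸ (by simp); simpa using this
  simp only [Fin.ext_iff, Fin.lt_def] at *
  omega

lemma pairIdx_ext {r s : PairIdx d}
    (h : ({r.1.1, r.1.2} : Finset (Fin d)) = {s.1.1, s.1.2}) : r = s := by
  obtain ⟨h1, h2⟩ := pair_finset_inj r.2 s.2 h
  exact Subtype.ext (Prod.ext h1 h2)

lemma pairPerm_eq {σ : Equiv.Perm (Fin d)} {a b a' b' : Fin d}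
    (hab : a < b) (hab' : a' < b')
    (h : (σ a = a' ∧ σ b = b') ∨ (σ a = b' ∧ σ b = a')) :
    pairPerm σ (⟨(a, b), hab⟩ : PairIdx d) = ⟨(a', b'), hab'⟩ := by
  apply pairIdx_ext
  rw [pairPerm_set]
  rcases h with ⟨h1, h2⟩ | ⟨h1, h2⟩ <;>
    simp [Finset.image_insert, h1, h2, Finset.pair_comm]

lemma exists_perm_of_list (g : Fin d → Fin K) :
    ∀ l : List (Fin d × Fin d), (l.map Prod.fst).Nodup → (l.map Prod.snd).Nodup →
      (∀ p ∈ l, g p.1 = g p.2) →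
      ∃ σ : Equiv.Perm (Fin d), (∀ x, g (σ x) = g x) ∧ ∀ p ∈ l, σ p.1 = p.2 := by
  intro l
  induction l with
  | nil => exact fun _ _ _ => ⟨1, fun x => rfl, by simp⟩
  | cons q l ih =>
    intro h1 h2 h3
    simp only [List.map_cons, List.nodup_cons] at h1 h2
    obtain ⟨σ₀, hσ₀g, hσ₀⟩ := ih h1.2 h2.2 (fun p hp => h3 p (List.mem_cons_of_mem _ hp))
    have hgc : g (σ₀ q.1) = g q.2 := by
      rw [hσ₀g]; exact h3 q List.mem_cons_self
    refine ⟨Equiv.swap (σ₀ q.1) q.2 * σ₀, ?_, ?_⟩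
    · intro x
      simp only [Equiv.Perm.mul_apply]
      rcases eq_or_ne (σ₀ x) (σ₀ q.1) with h | h
      · rw [h, Equiv.swap_apply_left, ← hgc, ← h, hσ₀g]
      · rcases eq_or_ne (σ₀ x) q.2 with h' | h'
        · rw [h', Equiv.swap_apply_right, hgc, ← h', hσ₀g]
        · rw [Equiv.swap_apply_of_ne_of_ne h h', hσ₀g]
    · intro p hp
      rcases List.mem_cons.mp hp with rfl | hp
      · simp [Equiv.Perm.mul_apply]
      · have h2' : p.2 ≠ q.2 := by
          intro h; exact h2.1 (h ▸ List.mem_map_of_mem (f := Prod.snd) hp)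
        have hpc : p.2 ≠ σ₀ q.1 := by
          intro h
          have hq : σ₀ p.1 = σ₀ q.1 := by rw [hσ₀ p hp, h]
          exact h1.1 (σ₀.injective hq ▸ List.mem_map_of_mem (f := Prod.fst) hp)
        simp [Equiv.Perm.mul_apply, hσ₀ p hp, Equiv.swap_apply_of_ne_of_ne hpc h2']

lemma classify {a b c e : Fin d} (hab : a < b) (hce : c < e) :
    (({a, b} ∩ {c, e} : Finset (Fin d)).card = 2 ∧ a = c ∧ b = e)
  ∨ (({a, b} ∩ {c, e} : Finset (Fin d)).card = 1 ∧ ∃ x y z : Fin d,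
      x ≠ y ∧ x ≠ z ∧ y ≠ z ∧
      ({a, b} ∩ {c, e} : Finset (Fin d)) = {x} ∧
      ((x = a ∧ y = b) ∨ (x = b ∧ y = a)) ∧ ((x = c ∧ z = e) ∨ (x = e ∧ z = c)))
  ∨ (({a, b} ∩ {c, e} : Finset (Fin d)).card = 0 ∧ a ≠ c ∧ a ≠ e ∧ b ≠ c ∧ b ≠ e) := by
  by_cases hac : a = c <;> by_cases hae : a = e <;> by_cases hbc : b = c <;>
    by_cases hbe : b = e
  all_goals (
    first
    | (exfalso; simp only [Fin.ext_iff, Fin.lt_def] at *; omega)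
    | (refine Or.inl ⟨?_, hac, hbe⟩
       have h : ({a, b} ∩ {c, e} : Finset (Fin d)) = {a, b} := by
         ext t
         simp only [Finset.mem_inter, Finset.mem_insert, Finset.mem_singleton]
         simp only [Fin.ext_iff, Fin.lt_def] at *
         omega
       rw [h, Finset.card_pair (ne_of_lt hab)])
    | (have h : ({a, b} ∩ {c, e} : Finset (Fin d)) = {a} := by
         ext t
         simp only [Finset.mem_inter, Finset.mem_insert, Finset.mem_singleton]
         simp only [Fin.ext_iff, Fin.lt_def] at *
         omega
       refine Or.inr (Or.inl ⟨by rw [h, Finset.card_singleton], a, b, ?_, ne_of_lt hab,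
         ?_, ?_, h, Or.inl ⟨rfl, rfl⟩, ?_⟩)
       case _ => exact if a = c then e else c
       all_goals (simp only [Fin.ext_iff, Fin.lt_def] at *; split_ifs <;> omega))
    | (have h : ({a, b} ∩ {c, e} : Finset (Fin d)) = {b} := by
         ext t
         simp only [Finset.mem_inter, Finset.mem_insert, Finset.mem_singleton]
         simp only [Fin.ext_iff, Fin.lt_def] at *
         omega
       refine Or.inr (Or.inl ⟨by rw [h, Finset.card_singleton], b, a, ?_,
         Ne.symm (ne_of_lt hab), ?_, ?_, h, Or.inr ⟨rfl, rfl⟩, ?_⟩)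
       case _ => exact if b = c then e else c
       all_goals (simp only [Fin.ext_iff, Fin.lt_def] at *; split_ifs <;> omega))
    | (have h : ({a, b} ∩ {c, e} : Finset (Fin d)) = ∅ := by
         ext t
         simp only [Finset.mem_inter, Finset.mem_insert, Finset.mem_singleton,
           Finset.notMem_empty, iff_false]
         simp only [Fin.ext_iff, Fin.lt_def] at *
         omega
       exact Or.inr (Or.inr ⟨by rw [h, Finset.card_empty], hac, hae, hbc, hbe⟩)))

lemma mpair_cancel {α : Type*} {p q q' : α} (h : ({p, q} : Multiset α) = {p, q'}) :
    q = q' := by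
  have := (Multiset.cons_inj_right p).mp h
  simpa using this

lemma key (g : Fin d → Fin K) (r r' s s' : PairIdx d)
    (hrr' : sameBlock g r r') (hss' : sameBlock g s s')
    (hov : overlap g r s = overlap g r' s') :
    ∃ σ : Equiv.Perm (Fin d), (∀ x, g (σ x) = g x) ∧
      pairPerm σ r = r' ∧ pairPerm σ s = s' := by
  obtain ⟨⟨a, b⟩, hab⟩ := r
  obtain ⟨⟨c, e⟩, hce⟩ := s
  obtain ⟨⟨a', b'⟩, hab'⟩ := r'
  obtain ⟨⟨c', e'⟩, hce'⟩ := s'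
  replace hab : a < b := hab
  replace hce : c < e := hce
  replace hab' : a' < b' := hab'
  replace hce' : c' < e' := hce'
  simp only [sameBlock] at hrr' hss'
  simp only [overlap] at hov
  have hcard := congrArg Multiset.card hov
  simp only [Multiset.card_map, ← Finset.card_def] at hcard
  rcases classify hab hce with ⟨hc2, h1, h2⟩ |
      ⟨hc1, x, y, z, hxy, hxz, hyz, hT, hor, hos⟩ | ⟨hc0, h1, h2, h3, h4⟩ <;>
    rcases classify hab' hce' with ⟨hc2', h1', h2'⟩ |
      ⟨hc1', x', y', z', hxy', hxz', hyz', hT', hor', hos'⟩ | ⟨hc0', h1', h2', h3', h4'⟩ <;>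
    try (exfalso; omega)
  -- case (2,2)
  · subst h1; subst h2; subst h1'; subst h2'
    rcases hrr' with ⟨hg1, hg2⟩ | ⟨hg1, hg2⟩
    · obtain ⟨σ, hσg, hσ⟩ := exists_perm_of_list g [(a, a'), (b, b')]
        (by simp [Fin.ext_iff] at *; omega) (by simp [Fin.ext_iff] at *; omega)
        (by intro p hp; simp at hp; rcases hp with rfl | rfl
            · exact hg1
            · exact hg2)
      have hs1 : σ a = a' := hσ (a, a') (by simp)
      have hs2 : σ b = b' := hσ (b, b') (by simp)
      exact ⟨σ, hσg, pairPerm_eq hab hab' (Or.inl ⟨hs1, hs2⟩),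
        pairPerm_eq hce hce' (Or.inl ⟨hs1, hs2⟩)⟩
    · obtain ⟨σ, hσg, hσ⟩ := exists_perm_of_list g [(a, b'), (b, a')]
        (by simp [Fin.ext_iff] at *; omega) (by simp [Fin.ext_iff] at *; omega)
        (by intro p hp; simp at hp; rcases hp with rfl | rfl
            · exact hg1
            · exact hg2)
      have hs1 : σ a = b' := hσ (a, b') (by simp)
      have hs2 : σ b = a' := hσ (b, a') (by simp)
      exact ⟨σ, hσg, pairPerm_eq hab hab' (Or.inr ⟨hs1, hs2⟩),
        pairPerm_eq hce hce' (Or.inr ⟨hs1, hs2⟩)⟩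
  -- case (1,1)
  · have hgx : g x = g x' := by
      rw [hT, hT'] at hov; simpa using hov
    have hmr : ({g x, g y} : Multiset (Fin K)) = {g x', g y'} := by
      have e1 : ({g x, g y} : Multiset (Fin K)) = {g a, g b} := by
        rcases hor with ⟨rfl, rfl⟩ | ⟨rfl, rfl⟩
        · rfl
        · exact Multiset.cons_swap _ _ _
      have e2 : ({g a, g b} : Multiset (Fin K)) = {g a', g b'} := by
        rcases hrr' with ⟨hh1, hh2⟩ | ⟨hh1, hh2⟩
        · rw [hh1, hh2]
        · rw [hh1, hh2]; exact Multiset.cons_swap _ _ _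
      have e3 : ({g a', g b'} : Multiset (Fin K)) = {g x', g y'} := by
        rcases hor' with ⟨rfl, rfl⟩ | ⟨rfl, rfl⟩
        · rfl
        · exact Multiset.cons_swap _ _ _
      rw [e1, e2, e3]
    have hms : ({g x, g z} : Multiset (Fin K)) = {g x', g z'} := by
      have e1 : ({g x, g z} : Multiset (Fin K)) = {g c, g e} := by
        rcases hos with ⟨rfl, rfl⟩ | ⟨rfl, rfl⟩
        · rfl
        · exact Multiset.cons_swap _ _ _
      have e2 : ({g c, g e} : Multiset (Fin K)) = {g c', g e'} := by
        rcases hss' with ⟨hh1, hh2⟩ | ⟨hh1, hh2⟩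
        · rw [hh1, hh2]
        · rw [hh1, hh2]; exact Multiset.cons_swap _ _ _
      have e3 : ({g c', g e'} : Multiset (Fin K)) = {g x', g z'} := by
        rcases hos' with ⟨rfl, rfl⟩ | ⟨rfl, rfl⟩
        · rfl
        · exact Multiset.cons_swap _ _ _
      rw [e1, e2, e3]
    have hgy : g y = g y' := mpair_cancel (by rw [hmr, hgx])
    have hgz : g z = g z' := mpair_cancel (by rw [hms, hgx])
    obtain ⟨σ, hσg, hσ⟩ := exists_perm_of_list g [(x, x'), (y, y'), (z, z')]
      (by simp [Fin.ext_iff] at *; omega) (by simp [Fin.ext_iff] at *; omega)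
      (by intro p hp; simp at hp; rcases hp with rfl | rfl | rfl
          · exact hgx
          · exact hgy
          · exact hgz)
    have hs1 : σ x = x' := hσ (x, x') (by simp)
    have hs2 : σ y = y' := hσ (y, y') (by simp)
    have hs3 : σ z = z' := hσ (z, z') (by simp)
    refine ⟨σ, hσg, pairPerm_eq hab hab' ?_, pairPerm_eq hce hce' ?_⟩
    · rcases hor with ⟨rfl, rfl⟩ | ⟨rfl, rfl⟩ <;> rcases hor' with ⟨rfl, rfl⟩ | ⟨rfl, rfl⟩ <;>
        first
        | exact Or.inl ⟨hs1, hs2⟩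
        | exact Or.inr ⟨hs1, hs2⟩
        | exact Or.inl ⟨hs2, hs1⟩
        | exact Or.inr ⟨hs2, hs1⟩
    · rcases hos with ⟨rfl, rfl⟩ | ⟨rfl, rfl⟩ <;> rcases hos' with ⟨rfl, rfl⟩ | ⟨rfl, rfl⟩ <;>
        first
        | exact Or.inl ⟨hs1, hs3⟩
        | exact Or.inr ⟨hs1, hs3⟩
        | exact Or.inl ⟨hs3, hs1⟩
        | exact Or.inr ⟨hs3, hs1⟩
  -- case (0,0)
  · rcases hrr' with ⟨hg1, hg2⟩ | ⟨hg1, hg2⟩ <;> rcases hss' with ⟨hg3, hg4⟩ | ⟨hg3, hg4⟩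
    · obtain ⟨σ, hσg, hσ⟩ := exists_perm_of_list g [(a, a'), (b, b'), (c, c'), (e, e')]
        (by simp [Fin.ext_iff] at *; omega) (by simp [Fin.ext_iff] at *; omega)
        (by intro p hp; simp at hp
            rcases hp with rfl | rfl | rfl | rfl <;> first | exact hg1 | exact hg2 | exact hg3 | exact hg4)
      exact ⟨σ, hσg,
        pairPerm_eq hab hab' (Or.inl ⟨hσ (a, a') (by simp), hσ (b, b') (by simp)⟩),
        pairPerm_eq hce hce' (Or.inl ⟨hσ (c, c') (by simp), hσ (e, e') (by simp)⟩)⟩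
    · obtain ⟨σ, hσg, hσ⟩ := exists_perm_of_list g [(a, a'), (b, b'), (c, e'), (e, c')]
        (by simp [Fin.ext_iff] at *; omega) (by simp [Fin.ext_iff] at *; omega)
        (by intro p hp; simp at hp
            rcases hp with rfl | rfl | rfl | rfl <;> first | exact hg1 | exact hg2 | exact hg3 | exact hg4)
      exact ⟨σ, hσg,
        pairPerm_eq hab hab' (Or.inl ⟨hσ (a, a') (by simp), hσ (b, b') (by simp)⟩),
        pairPerm_eq hce hce' (Or.inr ⟨hσ (c, e') (by simp), hσ (e, c') (by simp)⟩)⟩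
    · obtain ⟨σ, hσg, hσ⟩ := exists_perm_of_list g [(a, b'), (b, a'), (c, c'), (e, e')]
        (by simp [Fin.ext_iff] at *; omega) (by simp [Fin.ext_iff] at *; omega)
        (by intro p hp; simp at hp
            rcases hp with rfl | rfl | rfl | rfl <;> first | exact hg1 | exact hg2 | exact hg3 | exact hg4)
      exact ⟨σ, hσg,
        pairPerm_eq hab hab' (Or.inr ⟨hσ (a, b') (by simp), hσ (b, a') (by simp)⟩),
        pairPerm_eq hce hce' (Or.inl ⟨hσ (c, c') (by simp), hσ (e, e') (by simp)⟩)⟩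
    · obtain ⟨σ, hσg, hσ⟩ := exists_perm_of_list g [(a, b'), (b, a'), (c, e'), (e, c')]
        (by simp [Fin.ext_iff] at *; omega) (by simp [Fin.ext_iff] at *; omega)
        (by intro p hp; simp at hp
            rcases hp with rfl | rfl | rfl | rfl <;> first | exact hg1 | exact hg2 | exact hg3 | exact hg4)
      exact ⟨σ, hσg,
        pairPerm_eq hab hab' (Or.inr ⟨hσ (a, b') (by simp), hσ (b, a') (by simp)⟩),
        pairPerm_eq hce hce' (Or.inr ⟨hσ (c, e') (by simp), hσ (e, c') (by simp)⟩)⟩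


/-- `pairPerm σ` as an equivalence on sorted pairs. -/
def pairEquiv (σ : Equiv.Perm (Fin d)) : PairIdx d ≃ PairIdx d where
  toFun := pairPerm σ
  invFun := pairPerm σ.symm
  left_inv r := pairIdx_ext (by
    rw [pairPerm_set, pairPerm_set, Finset.image_image]
    simp)
  right_inv r := pairIdx_ext (by
    rw [pairPerm_set, pairPerm_set, Finset.image_image]
    simp)

lemma sameBlock_pairPerm (g : Fin d → Fin K) {σ : Equiv.Perm (Fin d)}
    (hσ : ∀ x, g (σ x) = g x) (r : PairIdx d) : sameBlock g r (pairPerm σ r) := by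
  unfold pairPerm sameBlock
  split_ifs <;> simp [hσ]

lemma overlap_pairPerm (g : Fin d → Fin K) {σ : Equiv.Perm (Fin d)}
    (hσ : ∀ x, g (σ x) = g x) (r s : PairIdx d) :
    overlap g (pairPerm σ r) (pairPerm σ s) = overlap g r s := by
  unfold overlap
  rw [pairPerm_set, pairPerm_set, ← Finset.image_inter _ _ σ.injective]
  rw [Finset.image_val_of_injOn (Set.injOn_of_injective σ.injective), Multiset.map_map]
  exact Multiset.map_congr rfl (fun x _ => hσ x)

lemma submatrix_eq (g : Fin d → Fin K) {S : Matrix (PairIdx d) (PairIdx d) ℝ}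
    (hS : inSG g S) {σ : Equiv.Perm (Fin d)} (hσ : ∀ x, g (σ x) = g x) :
    S.submatrix (pairEquiv σ) (pairEquiv σ) = S := by
  ext r s
  exact (hS.2 r (pairPerm σ r) s (pairPerm σ s) (sameBlock_pairPerm g hσ r)
    (sameBlock_pairPerm g hσ s) (overlap_pairPerm g hσ r s).symm).symm

lemma inSG_inv (g : Fin d → Fin K) (S : Matrix (PairIdx d) (PairIdx d) ℝ)
    (h : inSG g S) : inSG g S⁻¹ := by
  constructor
  · have h1 := h.1
    unfold Matrix.IsSymm at h1 ⊢
    rw [Matrix.transpose_nonsing_inv, h1]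
  · intro r r' s s' hrr' hss' hov
    obtain ⟨σ, hσg, hr, hs⟩ := key g r r' s s' hrr' hss' hov
    have hsub : S.submatrix (pairEquiv σ) (pairEquiv σ) = S := submatrix_eq g h hσg
    have hinv : S⁻¹.submatrix (pairEquiv σ) (pairEquiv σ) = S⁻¹ := by
      rw [← Matrix.inv_submatrix_equiv, hsub]
    calc S⁻¹ r s = S⁻¹.submatrix (pairEquiv σ) (pairEquiv σ) r s := by rw [hinv]
    _ = S⁻¹ (pairPerm σ r) (pairPerm σ s) := rfl
    _ = S⁻¹ r' s' := by rw [hr, hs]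

end SGproof

/-- `𝒮_𝒢` is closed under matrix inversion: for an invertible matrix `S`,
`S ∈ 𝒮_𝒢` if and only if `S⁻¹ ∈ 𝒮_𝒢`. -/
theorem statement_15 {d K : ℕ} (hd : 2 ≤ d) (hK : 1 ≤ K)
    (g : Fin d → Fin K) (hg : Function.Surjective g)
    (S : Matrix (PairIdx d) (PairIdx d) ℝ) (hS : IsUnit S.det) :
    inSG g S ↔ inSG g S⁻¹ := by
  constructor
  · exact SGproof.inSG_inv g S
  · intro h
    have := SGproof.inSG_inv g S⁻¹ h
    rwa [Matrix.nonsing_inv_nonsing_inv S hS] at this
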